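/- For every positive integer ω, there exists a split graph G with clique number ω(G) = ω and proper orientation number χ⃗(G) = 2ω − 2. -/

import Mathlib

open SimpleGraph

structure Orient {V : Type*} (G : SimpleGraph V) where
  dir : V → V → Bool
  adj_of_dir : ∀ u v, dir u v = true → G.Adj u v
  dir_iff : ∀ u v, G.Adj u v → (dir u v = true ↔ ¬ dir v u = true)

def Orient.inDeg {V : Type*} [Fintype V] {G : SimpleGraph V} (D : Orient G) (v : V) : ℕ :=
  (Finset.univ.filter (fun u => D.dir u v = true)).card

def Orient.Proper {V : Type*} [Fintype V] {G : SimpleGraph V} (D : Orient G) : Prop :=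
  ∀ u v, G.Adj u v → D.inDeg u ≠ D.inDeg v

noncomputable def properOrientNum {V : Type*} [Fintype V] (G : SimpleGraph V) : ℕ :=
  sInf {k | ∃ D : Orient G, D.Proper ∧ ∀ v, D.inDeg v ≤ k}

/-- A split graph: the vertex set can be partitioned into a clique and an independent set. -/
def IsSplit {V : Type*} (G : SimpleGraph V) : Prop :=
  ∃ K : Set V, G.IsClique K ∧ ∀ u ∈ Kᶜ, ∀ v ∈ Kᶜ, ¬ G.Adj u v

open Finset

/-! ### construction -/

abbrev Idx (n : ℕ) := Fin n × Fin (n-1) × Fin (2*n*n)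

abbrev Vtx (n : ℕ) := Fin n ⊕ Idx n

variable {n : ℕ}

/-- window membership -/
def wmem (u : Idx n) (j : Fin n) : Prop := (j - u.1).val ≤ u.2.1.val

instance : DecidablePred (wmem (n := n) u) := fun _ => by unfold wmem; infer_instance

def splitG (n : ℕ) : SimpleGraph (Vtx n) where
  Adj x y := match x, y with
    | .inl i, .inl j => i ≠ j
    | .inl j, .inr u => wmem u j
    | .inr u, .inl j => wmem u j
    | .inr _, .inr _ => False
  symm := ⟨by rintro (i|u) (j|v) h <;> simp_all <;> omega⟩
  loopless := ⟨by rintro (i|u) h <;> simp_all⟩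

@[simp] lemma splitG_adj_ll (i j : Fin n) : (splitG n).Adj (.inl i) (.inl j) ↔ i ≠ j := Iff.rfl
@[simp] lemma splitG_adj_lr (j : Fin n) (u : Idx n) :
    (splitG n).Adj (.inl j) (.inr u) ↔ wmem u j := Iff.rfl
@[simp] lemma splitG_adj_rl (j : Fin n) (u : Idx n) :
    (splitG n).Adj (.inr u) (.inl j) ↔ wmem u j := Iff.rfl
@[simp] lemma splitG_adj_rr (u v : Idx n) : ¬ (splitG n).Adj (.inr u) (.inr v) := fun h => h

lemma card_val_le {m t : ℕ} (ht : t < m) :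
    (univ.filter (fun x : Fin m => x.val ≤ t)).card = t + 1 := by
  have : univ.filter (fun x : Fin m => x.val ≤ t) = Finset.Iic ⟨t, ht⟩ := by
    ext x; simp [Finset.mem_Iic, Fin.le_def]
  rw [this, Fin.card_Iic]

lemma card_val_lt {m : ℕ} (j : Fin m) :
    (univ.filter (fun x : Fin m => x.val < j.val)).card = j.val := by
  have : univ.filter (fun x : Fin m => x.val < j.val) = Finset.Iio j := by
    ext x; simp only [mem_filter, mem_univ, true_and, Finset.mem_Iio, Fin.lt_def]
  rw [this, Fin.card_Iio]

lemma wmem_self (u : Idx n) : wmem u u.1 := by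
  haveI : NeZero n := ⟨by have := u.1.pos; omega⟩
  unfold wmem; rw [sub_self, Fin.val_zero]; exact Nat.zero_le _

lemma wsize_lt (hn : 2 ≤ n) (u : Idx n) : u.2.1.val + 1 < n := by
  have := u.2.1.isLt; omega

lemma card_wmem (hn : 2 ≤ n) (u : Idx n) :
    (univ.filter (fun j => wmem u j)).card = u.2.1.val + 1 := by
  haveI : NeZero n := ⟨by omega⟩
  rw [← card_val_le (m := n) (t := u.2.1.val) (by have := wsize_lt hn u; omega)]
  apply Finset.card_bij (fun j _ => j - u.1)
  · intro a ha; simp only [mem_filter, mem_univ, true_and] at ha ⊢; exact ha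
  · intro a ha b hb hab; exact sub_left_injective hab
  · intro b hb
    refine ⟨b + u.1, ?_, by simp⟩
    simp only [mem_filter, mem_univ, true_and] at hb ⊢
    unfold wmem; rw [add_sub_cancel_right]; exact hb

lemma card_filter_sum {α β : Type*} [Fintype α] [Fintype β] (p : α ⊕ β → Bool) :
    (univ.filter (fun x => p x = true)).card
      = (univ.filter (fun a => p (.inl a) = true)).card
        + (univ.filter (fun b => p (.inr b) = true)).card := by
  classical
  rw [Finset.card_filter, Finset.card_filter, Finset.card_filter, Fintype.sum_sum_type]

/-! ### the upper bound orientation -/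

def isFeeder (u : Idx n) : Prop := u.1.val ≠ 0 ∧ u.2.1.val = n - 2 ∧ u.2.2.val ≤ n - 2

instance : DecidablePred (isFeeder (n := n)) := fun _ => by unfold isFeeder; infer_instance

def upDir : Vtx n → Vtx n → Bool := fun x y => match x, y with
  | .inl i, .inl j => decide (i.val < j.val)
  | .inr u, .inl j => decide (isFeeder u ∧ j = u.1)
  | .inl j, .inr u => decide (wmem u j ∧ ¬(isFeeder u ∧ j = u.1))
  | .inr _, .inr _ => false

def upOrient (hn : 2 ≤ n) : Orient (splitG n) where
  dir := upDir
  adj_of_dir := by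
    rintro (i|u) (j|v) h <;> simp only [upDir, decide_eq_true_eq] at h
    · simp only [splitG_adj_ll]; rintro rfl; omega
    · exact h.1
    · rcases h with ⟨hf, rfl⟩; exact wmem_self u
    · simp at h
  dir_iff := by
    rintro (i|u) (j|v) h <;>
      simp only [upDir, decide_eq_true_eq, splitG_adj_ll, splitG_adj_lr, splitG_adj_rl] at h ⊢
    · have : i.val ≠ j.val := fun hh => h (Fin.ext hh)
      omega
    · tauto
    · tauto
    · exact h.elim

lemma feeder_count (hn : 2 ≤ n) (j : Fin n) :
    (univ.filter (fun u : Idx n => isFeeder u ∧ j = u.1)).card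
      = if j.val = 0 then 0 else n - 1 := by
  classical
  have hs2 : n - 2 < n - 1 := by omega
  by_cases hj : j.val = 0
  · rw [if_pos hj]
    rw [Finset.card_eq_zero, Finset.filter_eq_empty_iff]
    rintro ⟨k, s, m⟩ _ ⟨⟨h1, _⟩, rfl⟩
    exact h1 hj
  · rw [if_neg hj]
    have hset : univ.filter (fun u : Idx n => isFeeder u ∧ j = u.1)
        = {j} ×ˢ ({(⟨n-2, hs2⟩ : Fin (n-1))} ×ˢ
            (univ.filter (fun m : Fin (2*n*n) => m.val ≤ n - 2))) := by
      ext ⟨k, s, m⟩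
      simp only [mem_filter, mem_univ, true_and, Finset.mem_product, Finset.mem_singleton]
      constructor
      · rintro ⟨⟨_, h2, h3⟩, rfl⟩
        exact ⟨rfl, Fin.ext h2, h3⟩
      · rintro ⟨rfl, rfl, h3⟩
        exact ⟨⟨hj, rfl, h3⟩, rfl⟩
    rw [hset, Finset.card_product, Finset.card_product, Finset.card_singleton,
      Finset.card_singleton]
    have hlt : n - 2 < 2*n*n := by nlinarith [Nat.sub_le n 2]
    have := card_val_le (m := 2*n*n) (t := n-2) hlt
    rw [this]
    omega

lemma upOrient_inDeg_l (hn : 2 ≤ n) (j : Fin n) :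
    (upOrient hn).inDeg (.inl j) = j.val + (if j.val = 0 then 0 else n - 1) := by
  unfold Orient.inDeg
  rw [card_filter_sum (fun x => (upOrient hn).dir x (.inl j))]
  congr 1
  · rw [← card_val_lt j]
    congr 1; ext i
    simp [upOrient, upDir]
  · rw [← feeder_count hn j]
    congr 1; ext u
    simp [upOrient, upDir]

lemma upOrient_inDeg_r (hn : 2 ≤ n) (u : Idx n) :
    (upOrient hn).inDeg (.inr u) = if isFeeder u then n - 2 else u.2.1.val + 1 := by
  unfold Orient.inDeg
  rw [card_filter_sum (fun x => (upOrient hn).dir x (.inr u))]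
  have h2 : (univ.filter (fun b : Idx n => (upOrient hn).dir (.inr b) (.inr u) = true)).card = 0 := by
    simp [upOrient, upDir]
  rw [h2, Nat.add_zero]
  by_cases hf : isFeeder u
  · rw [if_pos hf]
    have : (univ.filter (fun j : Fin n => (upOrient hn).dir (.inl j) (.inr u) = true))
        = (univ.filter (fun j => wmem u j)).erase u.1 := by
      ext j
      simp only [mem_filter, mem_univ, true_and, Finset.mem_erase]
      simp only [upOrient, upDir, decide_eq_true_eq]
      constructor
      · rintro ⟨hw, hno⟩; exact ⟨fun hh => hno ⟨hf, hh⟩, hw⟩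
      · rintro ⟨hne, hw⟩; exact ⟨hw, fun ⟨_, hh⟩ => hne hh⟩
    rw [this, Finset.card_erase_of_mem, card_wmem hn u]
    · have := hf.2.1; omega
    · simp only [mem_filter, mem_univ, true_and]; exact wmem_self u
  · rw [if_neg hf, ← card_wmem hn u]
    congr 1; ext j
    simp only [mem_filter, mem_univ, true_and]
    simp only [upOrient, upDir, decide_eq_true_eq]
    constructor
    · rintro ⟨hw, _⟩; exact hw
    · intro hw; exact ⟨hw, fun ⟨hff, _⟩ => hf hff⟩

lemma upOrient_proper (hn : 2 ≤ n) : (upOrient hn).Proper := by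
  haveI : NeZero n := ⟨by omega⟩
  have key : ∀ (j : Fin n) (u : Idx n), wmem u j →
      (upOrient hn).inDeg (.inl j) ≠ (upOrient hn).inDeg (.inr u) := by
    intro j u hw
    rw [upOrient_inDeg_l hn j, upOrient_inDeg_r hn u]
    have hs := u.2.1.isLt
    have hjlt := j.isLt
    split_ifs with hj0 hf hf
    · -- j.val = 0 and feeder
      by_cases h3 : 3 ≤ n
      · omega
      · exfalso
        have hn2 : n = 2 := by omega
        have hs0 : u.2.1.val = 0 := by have := hf.2.1; omega
        have hz : (j - u.1) = 0 := by
          have hww := hw; unfold wmem at hww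
          rw [hs0] at hww
          exact Fin.ext (by rw [Fin.val_zero]; omega)
        have hj : j = u.1 := sub_eq_zero.mp hz
        exact hf.1 (by rw [← hj]; exact hj0)
    · omega
    · omega
    · omega
  rintro (i|u) (j|v) hadj
  · rw [upOrient_inDeg_l hn i, upOrient_inDeg_l hn j]
    have hne : i.val ≠ j.val := fun hh => hadj (Fin.ext hh)
    have := i.isLt
    have := j.isLt
    split_ifs <;> omega
  · exact key i v hadj
  · exact (key j u hadj).symm
  · exact absurd hadj (splitG_adj_rr u v)

lemma upOrient_max (hn : 2 ≤ n) : ∀ v, (upOrient hn).inDeg v ≤ 2*n - 2 := by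
  rintro (j|u)
  · rw [upOrient_inDeg_l hn j]
    have := j.isLt
    split_ifs <;> omega
  · rw [upOrient_inDeg_r hn u]
    have := u.2.1.isLt
    split_ifs <;> omega

/-! ### the lower bound -/

lemma lower_bound (hn : 2 ≤ n) (D : Orient (splitG n)) (hp : D.Proper)
    (hb : ∀ v, D.inDeg v ≤ 2*n - 3) : False := by
  classical
  set f : Vtx n → Vtx n → ℕ := fun a b => if D.dir a b = true then 1 else 0 with hf
  have hinDeg : ∀ v, D.inDeg v = ∑ a : Vtx n, f a v := by
    intro v; rw [Orient.inDeg, Finset.card_filter]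
  -- each pair contributes 1
  have hpair : ∀ j k : Fin n, f (.inl j) (.inl k) + f (.inl k) (.inl j)
      = if j = k then 0 else 1 := by
    intro j k
    by_cases h : j = k
    · subst h
      rw [if_pos rfl]
      have : ¬ D.dir (.inl j) (.inl j) = true := by
        intro hd
        exact (splitG n).loopless.irrefl _ (D.adj_of_dir _ _ hd)
      simp [hf, this]
    · rw [if_neg h]
      have hadj : (splitG n).Adj (.inl j) (.inl k) := h
      have := D.dir_iff _ _ hadj
      by_cases hd : D.dir (.inl j) (.inl k) = true
      · have : ¬ D.dir (.inl k) (.inl j) = true := (this.mp hd)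
        simp [hf, hd, this]
      · have hkj : D.dir (.inl k) (.inl j) = true := by
          by_contra hcon
          exact hd (this.mpr hcon)
        simp [hf, hd, hkj]
  -- internal sum
  set Sint := ∑ j : Fin n, ∑ k : Fin n, f (.inl j) (.inl k) with hSint
  have hint2 : 2 * Sint = n * n - n := by
    have hswap : (∑ j : Fin n, ∑ k : Fin n, f (.inl k) (.inl j)) = Sint := by
      rw [hSint]; exact Finset.sum_comm
    have h1 : (∑ j : Fin n, ∑ k : Fin n,
        (f (.inl j) (.inl k) + f (.inl k) (.inl j))) = Sint + Sint := by
      rw [Finset.sum_congr rfl (fun j _ => Finset.sum_add_distrib),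
        Finset.sum_add_distrib, hswap, hSint]
    have h2 : ∀ j : Fin n, (∑ k : Fin n, if j = k then (0:ℕ) else 1) = n - 1 := by
      intro j
      calc (∑ k : Fin n, if j = k then (0:ℕ) else 1)
          = ∑ k : Fin n, (if ¬ (j = k) then (1:ℕ) else 0) := by
            refine Finset.sum_congr rfl fun k _ => ?_
            by_cases h : j = k <;> simp [h]
        _ = (univ.filter (fun k : Fin n => ¬ (j = k))).card :=
            (Finset.card_filter _ _).symm
        _ = (univ.erase j).card := by
            congr 1; ext k; simp [Finset.mem_erase, eq_comm]
        _ = n - 1 := by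
            rw [Finset.card_erase_of_mem (Finset.mem_univ j), Finset.card_univ,
              Fintype.card_fin]
    calc 2 * Sint = Sint + Sint := two_mul Sint
      _ = ∑ j : Fin n, ∑ k : Fin n, (f (.inl j) (.inl k) + f (.inl k) (.inl j)) := h1.symm
      _ = ∑ j : Fin n, ∑ k : Fin n, (if j = k then (0:ℕ) else 1) := by
            exact Finset.sum_congr rfl fun j _ => Finset.sum_congr rfl fun k _ => hpair j k
      _ = ∑ j : Fin n, (n - 1) := Finset.sum_congr rfl fun j _ => h2 j
      _ = n * (n - 1) := by rw [Finset.sum_const, Finset.card_univ, Fintype.card_fin, smul_eq_mul]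
      _ = n * n - n := by rw [Nat.mul_sub, Nat.mul_one]
  -- total indegree of the clique
  set X := ∑ u : Idx n, ∑ k : Fin n, f (.inr u) (.inl k) with hX
  have hT : (∑ k : Fin n, D.inDeg (.inl k)) = Sint + X := by
    have : (∑ k : Fin n, D.inDeg (.inl k))
        = ∑ k : Fin n, ((∑ j : Fin n, f (.inl j) (.inl k)) + (∑ u : Idx n, f (.inr u) (.inl k))) := by
      refine Finset.sum_congr rfl fun k _ => ?_
      rw [hinDeg, Fintype.sum_sum_type]
    rw [this, Finset.sum_add_distrib]
    congr 1
    · rw [hSint]; exact Finset.sum_comm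
    · rw [hX]; exact Finset.sum_comm
  have hTle : (∑ k : Fin n, D.inDeg (.inl k)) ≤ n * (2*n - 3) := by
    calc (∑ k : Fin n, D.inDeg (.inl k)) ≤ ∑ _k : Fin n, (2*n-3) :=
          Finset.sum_le_sum fun k _ => hb _
      _ = n * (2*n-3) := by rw [Finset.sum_const, Finset.card_univ, Fintype.card_fin, smul_eq_mul]
  have hab : n * (2*n - 3) = 2*(n*n) - 3*n := by
    rw [Nat.mul_sub]; congr 1 <;> ring
  have hnn : 2*n ≤ n*n := by nlinarith
  -- existence of independent vertices with no out-arc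
  have hexists : ∀ (k : Fin n) (s : Fin (n-1)), ∃ m : Fin (2*n*n),
      (∑ j : Fin n, f (.inr (k, s, m)) (.inl j)) = 0 := by
    intro k s
    by_contra hcon
    push_neg at hcon
    have hge : ∀ m, 1 ≤ ∑ j : Fin n, f (.inr (k, s, m)) (.inl j) :=
      fun m => Nat.one_le_iff_ne_zero.mpr (hcon m)
    have hXge : 2*n*n ≤ X := by
      have h1 : (2*n*n : ℕ) ≤ ∑ m : Fin (2*n*n), ∑ j : Fin n, f (.inr (k,s,m)) (.inl j) := by
        calc (2*n*n : ℕ) = ∑ _m : Fin (2*n*n), 1 := by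
              rw [Finset.sum_const, Finset.card_univ, Fintype.card_fin, smul_eq_mul, mul_one]
          _ ≤ _ := Finset.sum_le_sum fun m _ => hge m
      have h2a : (∑ m : Fin (2*n*n), ∑ j : Fin n, f (.inr (k,s,m)) (.inl j))
          ≤ ∑ s' : Fin (n-1), ∑ m : Fin (2*n*n), ∑ j : Fin n, f (.inr (k,s',m)) (.inl j) := by
        simpa using Finset.single_le_sum
          (f := fun s' : Fin (n-1) => ∑ m : Fin (2*n*n), ∑ j : Fin n, f (.inr (k,s',m)) (.inl j))
          (fun _ _ => Nat.zero_le _) (Finset.mem_univ s)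
      have h2b : (∑ s' : Fin (n-1), ∑ m : Fin (2*n*n), ∑ j : Fin n, f (.inr (k,s',m)) (.inl j))
          ≤ ∑ k' : Fin n, ∑ s' : Fin (n-1), ∑ m : Fin (2*n*n), ∑ j : Fin n,
              f (.inr (k',s',m)) (.inl j) := by
        simpa using Finset.single_le_sum
          (f := fun k' : Fin n => ∑ s' : Fin (n-1), ∑ m : Fin (2*n*n), ∑ j : Fin n,
            f (.inr (k',s',m)) (.inl j))
          (fun _ _ => Nat.zero_le _) (Finset.mem_univ k)
      have h2c : X = ∑ k' : Fin n, ∑ s' : Fin (n-1), ∑ m : Fin (2*n*n), ∑ j : Fin n,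
          f (.inr (k',s',m)) (.inl j) := by
        rw [hX, Fintype.sum_prod_type]
        exact Finset.sum_congr rfl fun k' _ => Fintype.sum_prod_type _
      omega
    have hSX := hT ▸ hTle
    rw [hab] at hSX
    rw [mul_assoc] at hXge
    omega
  -- such a vertex has indegree s+1
  have hind : ∀ (u : Idx n), (∑ j : Fin n, f (.inr u) (.inl j)) = 0 →
      D.inDeg (.inr u) = u.2.1.val + 1 := by
    intro u h0
    have hnod : ∀ j, ¬ D.dir (.inr u) (.inl j) = true := by
      intro j hd
      have h1 : f (.inr u) (.inl j) = 1 := by simp [hf, hd]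
      have hle : f (.inr u) (.inl j) ≤ ∑ j : Fin n, f (.inr u) (.inl j) := by
        simpa using Finset.single_le_sum (f := fun j : Fin n => f (.inr u) (.inl j))
          (fun _ _ => Nat.zero_le _) (Finset.mem_univ j)
      omega
    rw [hinDeg, Fintype.sum_sum_type]
    have hr : (∑ v : Idx n, f (.inr v) (.inr u)) = 0 := by
      apply Finset.sum_eq_zero; intro v _
      have hge : ¬ D.dir (.inr v) (.inr u) = true :=
        fun hd => splitG_adj_rr v u (D.adj_of_dir _ _ hd)
      simp [hf, hge]
    have hl : (∑ j : Fin n, f (.inl j) (.inr u)) = u.2.1.val + 1 := by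
      have heach : ∀ j : Fin n, f (.inl j) (.inr u) = if wmem u j then 1 else 0 := by
        intro j
        by_cases hw : wmem u j
        · have hadj : (splitG n).Adj (.inl j) (.inr u) := hw
          have hdir : D.dir (.inl j) (.inr u) = true := by
            have hadj' : (splitG n).Adj (.inr u) (.inl j) := hw
            have := (D.dir_iff _ _ hadj').mp
            by_contra hcon
            exact (hnod j) ((D.dir_iff _ _ hadj').mpr (by
              intro hh
              exact hcon hh))
          simp [hf, hdir, hw]
        · have hnd : ¬ D.dir (.inl j) (.inr u) = true :=
            fun hd => hw (D.adj_of_dir _ _ hd)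
          simp [hf, hnd, hw]
      rw [Finset.sum_congr rfl (fun j _ => heach j), ← Finset.card_filter]
      exact card_wmem hn u
    rw [hl, hr]
  -- clique indegrees avoid [1, n-1]
  have hnotmid : ∀ (k : Fin n) (t : ℕ), 1 ≤ t → t ≤ n - 1 → D.inDeg (.inl k) ≠ t := by
    intro k t h1 h2 heq
    have htn : t - 1 < n - 1 := by omega
    obtain ⟨m, hm⟩ := hexists k ⟨t - 1, htn⟩
    have hiu := hind _ hm
    have hadj : (splitG n).Adj (.inl k) (.inr (k, ⟨t-1, htn⟩, m)) := wmem_self (k, ⟨t-1, htn⟩, m)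
    have hne := hp _ _ hadj
    rw [hiu, heq] at hne
    simp only at hne
    omega
  -- pigeonhole on clique indegrees
  have hd0n : ∀ k : Fin n, D.inDeg (.inl k) = 0 ∨
      (n ≤ D.inDeg (.inl k) ∧ D.inDeg (.inl k) ≤ 2*n-3) := by
    intro k
    have hbk := hb (.inl k)
    by_cases h : D.inDeg (.inl k) = 0
    · exact Or.inl h
    · right
      refine ⟨?_, hbk⟩
      by_contra hlt
      exact hnotmid k (D.inDeg (.inl k)) (by omega) (by omega) rfl
  have hmono : ∀ k : Fin n, (if D.inDeg (.inl k) = 0 then 0 else D.inDeg (.inl k) - (n-1)) < n - 1 := by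
    intro k
    rcases hd0n k with h | ⟨h1, h2⟩
    · rw [if_pos h]; omega
    · rw [if_neg (by omega)]; omega
  have hinj : Function.Injective (fun k : Fin n =>
      (⟨if D.inDeg (.inl k) = 0 then 0 else D.inDeg (.inl k) - (n-1), hmono k⟩ : Fin (n-1))) := by
    intro k k' heq
    by_contra hne
    have hdist : D.inDeg (.inl k) ≠ D.inDeg (.inl k') := hp _ _ (by simpa using hne)
    simp only [Fin.mk.injEq] at heq
    rcases hd0n k with h | ⟨h1, h2⟩ <;> rcases hd0n k' with h' | ⟨h1', h2'⟩ <;>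
      split_ifs at heq <;> omega
  have := Fintype.card_le_of_injective _ hinj
  simp only [Fintype.card_fin] at this
  omega

/-! ### clique number and splitness -/

lemma splitG_isSplit (n : ℕ) : IsSplit (splitG n) := by
  refine ⟨{v : Vtx n | v.isLeft}, ?_, ?_⟩
  · rintro (i|u) hi (j|v) hj hne
    · exact fun h => hne (by rw [h])
    · simp at hj
    · simp at hi
    · simp at hi
  · rintro (i|u) hi (j|v) hj hadj
    · simp at hi
    · simp at hi
    · simp at hj
    · exact hadj

lemma splitG_clique_card_le (hn : 2 ≤ n) (t : Finset (Vtx n)) (ht : (splitG n).IsClique t) :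
    t.card ≤ n := by
  classical
  by_cases hex : ∃ u : Idx n, Sum.inr u ∈ t
  · obtain ⟨u, hu⟩ := hex
    have hsub : t ⊆ insert (Sum.inr u)
        ((univ.filter (fun j => wmem u j)).map ⟨Sum.inl, Sum.inl_injective⟩) := by
      intro x hx
      rcases x with j | v
      · have hadj : (splitG n).Adj (Sum.inl j) (Sum.inr u) := ht hx hu (by simp)
        rw [Finset.mem_insert]
        right
        simp only [Finset.mem_map, mem_filter, mem_univ, true_and,
          Function.Embedding.coeFn_mk]
        exact ⟨j, hadj, rfl⟩
      · have : v = u := by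
          by_contra hne
          exact splitG_adj_rr v u (ht hx hu (by simp [hne]))
        rw [this]; exact Finset.mem_insert_self _ _
    calc t.card ≤ _ := Finset.card_le_card hsub
      _ ≤ ((univ.filter (fun j => wmem u j)).map
            ⟨Sum.inl, Sum.inl_injective⟩).card + 1 := Finset.card_insert_le _ _
      _ = (u.2.1.val + 1) + 1 := by rw [Finset.card_map, card_wmem hn u]
      _ ≤ n := by have := wsize_lt hn u; omega
  · push_neg at hex
    have hsub : t ⊆ (univ : Finset (Fin n)).map ⟨Sum.inl, Sum.inl_injective⟩ := by
      intro x hx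
      rcases x with j | v
      · simp
      · exact absurd hx (hex v)
    calc t.card ≤ _ := Finset.card_le_card hsub
      _ = n := by rw [Finset.card_map, Finset.card_univ, Fintype.card_fin]

lemma splitG_cliqueNum (hn : 2 ≤ n) : (splitG n).cliqueNum = n := by
  have hmem : (splitG n).IsNClique n ((univ : Finset (Fin n)).map ⟨Sum.inl, Sum.inl_injective⟩) := by
    constructor
    · intro x hx y hy hne
      simp only [Finset.coe_map, Set.mem_image, Finset.mem_coe] at hx hy
      obtain ⟨i, _, rfl⟩ := hx
      obtain ⟨j, _, rfl⟩ := hy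
      exact fun h => hne (by rw [h])
    · rw [Finset.card_map, Finset.card_univ, Fintype.card_fin]
  apply le_antisymm
  · have hne : {m | ∃ s, (splitG n).IsNClique m s}.Nonempty :=
      ⟨0, ⟨∅, SimpleGraph.isNClique_empty.mpr rfl⟩⟩
    apply csSup_le hne
    rintro m ⟨s, hs⟩
    rw [← hs.2]
    exact splitG_clique_card_le hn s hs.1
  · apply le_csSup
    · exact ⟨n, fun m ⟨s, hs⟩ => hs.2 ▸ splitG_clique_card_le hn s hs.1⟩
    · exact ⟨_, hmem⟩

lemma splitG_properOrientNum (hn : 2 ≤ n) : properOrientNum (splitG n) = 2*n - 2 := by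
  have hmem : (2*n - 2) ∈ {k | ∃ D : Orient (splitG n), D.Proper ∧ ∀ v, D.inDeg v ≤ k} :=
    ⟨upOrient hn, upOrient_proper hn, upOrient_max hn⟩
  apply le_antisymm
  · exact Nat.sInf_le hmem
  · apply le_csInf ⟨_, hmem⟩
    rintro b ⟨D, hD, hble⟩
    by_contra hlt
    push_neg at hlt
    exact lower_bound hn D hD (fun v => le_trans (hble v) (by omega))

/-! ### the case ω = 1 -/

lemma bot_isSplit : IsSplit (⊥ : SimpleGraph (Fin 1)) :=
  ⟨∅, by simp [SimpleGraph.isClique_empty], fun u _ v _ h => h⟩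

lemma bot_cliqueNum : (⊥ : SimpleGraph (Fin 1)).cliqueNum = 1 := by
  have hb : ∀ m ∈ {m | ∃ s, (⊥ : SimpleGraph (Fin 1)).IsNClique m s}, m ≤ 1 := by
    rintro m ⟨s, hs⟩
    rw [← hs.2]
    rw [Finset.card_le_one]
    intro a ha b hb
    by_contra hne
    exact hs.1 ha hb hne
  apply le_antisymm
  · exact csSup_le ⟨0, ⟨∅, SimpleGraph.isNClique_empty.mpr rfl⟩⟩ hb
  · apply le_csSup ⟨1, hb⟩
    exact ⟨{0}, by simp [SimpleGraph.isNClique_iff, SimpleGraph.isClique_singleton]⟩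

lemma bot_properOrientNum : properOrientNum (⊥ : SimpleGraph (Fin 1)) = 0 := by
  have hmem : 0 ∈ {k | ∃ E : Orient (⊥ : SimpleGraph (Fin 1)), E.Proper ∧ ∀ v, E.inDeg v ≤ k} := by
    refine ⟨⟨fun _ _ => false, fun u v h => by simp at h, fun u v h => h.elim⟩,
      fun u v h => h.elim, fun v => ?_⟩
    show (Finset.univ.filter (fun u : Fin 1 => false = true)).card ≤ 0
    simp
  exact Nat.eq_zero_of_le_zero (Nat.sInf_le hmem)

/-- For every positive integer `ω`, there exists a split graph `G` with clique number `ω`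
and proper orientation number exactly `2ω - 2`. -/
theorem exists_split_properOrientNum_eq (ω : ℕ) (hω : 1 ≤ ω) :
    ∃ (V : Type) (_ : Fintype V) (G : SimpleGraph V),
      IsSplit G ∧ G.cliqueNum = ω ∧ properOrientNum G = 2 * ω - 2 := by
  by_cases h2 : 2 ≤ ω
  · exact ⟨Vtx ω, inferInstance, splitG ω, splitG_isSplit ω, splitG_cliqueNum h2,
      splitG_properOrientNum h2⟩
  · have h1 : ω = 1 := by omega
    subst h1
    exact ⟨Fin 1, inferInstance, ⊥, bot_isSplit, bot_cliqueNum, by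
      rw [bot_properOrientNum]⟩
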